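/- Let the CII estimate be Î_K = Σ_{ℓ=0}^{n−k} C(n−k,ℓ)·λ_{k,ℓ}·Σ_{W⊆K} (−1)^{k−|W|}·Î_{K,ℓ}^W, where for every W ⊆ K and ℓ ∈ L^{|W|} the stratum estimate Î_{K,ℓ}^W follows the stratum sampling model with count M_{W,ℓ} = 1 + Y_{W,ℓ}, Y_{W,ℓ} binomially distributed with parameters B̃ ≥ 1 and p_{W,ℓ} ≥ 1/γ_k and independent of that stratum's sample sequence, and Î_{K,ℓ}^W = I_{K,ℓ}^W for ℓ ∉ L^{|W|}. Assume λ_{k,ℓ} > 0 for all ℓ and R_K := Σ_{W⊆K} Σ_{ℓ∈L^{|W|}} r_{K,ℓ,W} > 0. Then for every ε > 0, P(|Î_K − I_K| ≥ ε) ≤ Σ_{W⊆K} Σ_{ℓ∈L^{|W|}} [ exp(−B̃/(2γ_k²)) + 2·exp(−2ε²/(C(n−k,ℓ)²·λ_{k,ℓ}²·R_K²))^⌊B̃/(2γ_k)⌋ / (exp(2ε²/(C(n−k,ℓ)²·λ_{k,ℓ}²·R_K²)) − 1) ]. -/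

import Mathlib

open MeasureTheory ProbabilityTheory Finset
open scoped ENNReal

/-- Finsets carry the discrete σ-algebra. -/
instance finsetMeasurableSpace (n : ℕ) : MeasurableSpace (Finset (Fin n)) := ⊤

/-- The stratum `{S ⊆ N∖K : |S| = ℓ}`. -/
def strata (n : ℕ) (K : Finset (Fin n)) (ℓ : ℕ) : Finset (Finset (Fin n)) :=
  Kᶜ.powerset.filter (fun S => S.card = ℓ)

/-- The stratum value `I_{K,ℓ}^W = (1/C(n−k,ℓ))·Σ_{S ⊆ N∖K, |S|=ℓ} ν(S ∪ W)`. -/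
noncomputable def stratVal (n : ℕ) (ν : Finset (Fin n) → ℝ)
    (K W : Finset (Fin n)) (ℓ : ℕ) : ℝ :=
  (((n - K.card).choose ℓ : ℝ))⁻¹ * ∑ S ∈ strata n K ℓ, ν (S ∪ W)

/-- The stratum variance `σ²_{K,ℓ,W}`: the variance of `ν(S ∪ W)` for `S` uniformly
distributed on `{S ⊆ N∖K : |S| = ℓ}`. -/
noncomputable def stratVar (n : ℕ) (ν : Finset (Fin n) → ℝ)
    (K W : Finset (Fin n)) (ℓ : ℕ) : ℝ :=
  (((n - K.card).choose ℓ : ℝ))⁻¹ *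
    ∑ S ∈ strata n K ℓ, (ν (S ∪ W) - stratVal n ν K W ℓ) ^ 2

/-- The cardinal interaction index `I_K`. -/
noncomputable def CII (n : ℕ) (ν : Finset (Fin n) → ℝ) (lam : ℕ → ℝ)
    (K : Finset (Fin n)) : ℝ :=
  ∑ S ∈ Kᶜ.powerset, lam S.card *
    ∑ W ∈ K.powerset, (-1 : ℝ) ^ (K.card - W.card) * ν (S ∪ W)

/-- The constants `γ_2 = 2(n−1)²` and `γ_k = n^{k−1}·(n−k+1)²` for `k ≥ 3`. -/
noncomputable def gam (n k : ℕ) : ℝ :=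
  if k = 2 then 2 * ((n : ℝ) - 1) ^ 2
  else (n : ℝ) ^ (k - 1) * ((n : ℝ) - k + 1) ^ 2

/-- The stratum estimate: sample mean for estimated strata, exact value otherwise. -/
noncomputable def IhatStrat {Ω : Type*} (n : ℕ) (ν : Finset (Fin n) → ℝ)
    (K : Finset (Fin n)) (L : ℕ → Finset ℕ)
    (S : Finset (Fin n) → ℕ → ℕ → Ω → Finset (Fin n))
    (M : Finset (Fin n) → ℕ → Ω → ℕ) (W : Finset (Fin n)) (ℓ : ℕ) (ω : Ω) : ℝ :=
  if ℓ ∈ L W.card then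
    ((M W ℓ ω : ℝ))⁻¹ * ∑ m ∈ Finset.range (M W ℓ ω), ν (S W ℓ m ω ∪ W)
  else stratVal n ν K W ℓ

/-- The CII estimate `Î_K`. -/
noncomputable def IhatCII {Ω : Type*} (n : ℕ) (ν : Finset (Fin n) → ℝ)
    (K : Finset (Fin n)) (lam : ℕ → ℝ) (L : ℕ → Finset ℕ)
    (S : Finset (Fin n) → ℕ → ℕ → Ω → Finset (Fin n))
    (M : Finset (Fin n) → ℕ → Ω → ℕ) (ω : Ω) : ℝ :=
  ∑ ℓ ∈ Finset.range (n - K.card + 1), ((n - K.card).choose ℓ : ℝ) * lam ℓ *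
    ∑ W ∈ K.powerset, (-1 : ℝ) ^ (K.card - W.card) * IhatStrat n ν K L S M W ℓ ω

/-- The stratum range `r_{K,ℓ,W} = max_{S⊆N∖K,|S|=ℓ} ν(S∪W) − min_{S⊆N∖K,|S|=ℓ} ν(S∪W)`. -/
noncomputable def stratRange (n : ℕ) (ν : Finset (Fin n) → ℝ)
    (K W : Finset (Fin n)) (ℓ : ℕ) : ℝ :=
  sSup ((fun S => ν (S ∪ W)) '' ↑(strata n K ℓ))
    - sInf ((fun S => ν (S ∪ W)) '' ↑(strata n K ℓ))

/-- `R_K = Σ_{W⊆K} Σ_{ℓ∈L^{|W|}} r_{K,ℓ,W}`. -/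
noncomputable def RK (n : ℕ) (ν : Finset (Fin n) → ℝ) (K : Finset (Fin n))
    (L : ℕ → Finset ℕ) : ℝ :=
  ∑ W ∈ K.powerset, ∑ ℓ ∈ L W.card, stratRange n ν K W ℓ

section Helpers
open Real

lemma gpos {p : ℝ} (hp0 : 0 ≤ p) (hp1 : p ≤ 1) (x : ℝ) : 0 < 1 - p + p * Real.exp x := by
  rcases eq_or_lt_of_le hp1 with h | h
  · subst h; simpa using Real.exp_pos x
  · have := mul_nonneg hp0 (Real.exp_pos x).le
    linarith

/-- Core analytic inequality of Hoeffding's lemma. -/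
lemma hoeff_core {p : ℝ} (hp0 : 0 ≤ p) (hp1 : p ≤ 1) (h : ℝ) :
    1 - p + p * Real.exp h ≤ Real.exp (p * h + h ^ 2 / 8) := by
  set g : ℝ → ℝ := fun x => 1 - p + p * Real.exp x with hgdef
  have hgpos : ∀ x, 0 < g x := fun x => gpos hp0 hp1 x
  set F : ℝ → ℝ := fun x => p * x + x ^ 2 / 8 - Real.log (g x) with hFdef
  set F' : ℝ → ℝ := fun x => p + x / 4 - p * Real.exp x / g x with hF'def
  have hg : ∀ x, HasDerivAt g (p * Real.exp x) x := by
    intro x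
    exact ((Real.hasDerivAt_exp x).const_mul p).const_add (1 - p)
  have hF : ∀ x, HasDerivAt F (F' x) x := by
    intro x
    have h1 : HasDerivAt (fun x : ℝ => p * x + x ^ 2 / 8) (p + x / 4) x := by
      have := ((hasDerivAt_id x).const_mul p).add ((hasDerivAt_pow 2 x).div_const 8)
      refine this.congr_deriv ?_
      norm_num
      ring
    have hlog : HasDerivAt (fun x => Real.log (g x)) (p * Real.exp x / g x) x :=
      (hg x).log (hgpos x).ne'
    exact h1.sub hlog
  have hF' : ∀ x, HasDerivAt F' (1 / 4 - p * (1 - p) * Real.exp x / g x ^ 2) x := by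
    intro x
    have h2 : HasDerivAt (fun x => p * Real.exp x / g x)
        ((p * Real.exp x * g x - p * Real.exp x * (p * Real.exp x)) / g x ^ 2) x :=
      ((Real.hasDerivAt_exp x).const_mul p).div (hg x) (hgpos x).ne'
    have h1 : HasDerivAt (fun x : ℝ => p + x / 4) (1 / 4) x := by
      simpa using ((hasDerivAt_id x).div_const 4).const_add p
    have := h1.sub h2
    refine this.congr_deriv ?_
    have hx := hgpos x
    field_simp
    ring
  have hF''nonneg : ∀ x, 0 ≤ 1 / 4 - p * (1 - p) * Real.exp x / g x ^ 2 := by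
    intro x
    rw [sub_nonneg, div_le_iff₀ (by have := gpos hp0 hp1 x; positivity)]
    have key : 0 ≤ (1 - p - p * Real.exp x) ^ 2 := sq_nonneg _
    simp only [hgdef]
    nlinarith [Real.exp_pos x]
  have hmono : Monotone F' := by
    apply monotone_of_deriv_nonneg
    · exact fun x => (hF' x).differentiableAt
    · intro x
      rw [(hF' x).deriv]
      exact hF''nonneg x
  have hF'0 : F' 0 = 0 := by
    simp only [hF'def, hgdef, Real.exp_zero, mul_one]
    have : 1 - p + p = 1 := by ring
    rw [this]
    ring
  have hF0 : F 0 = 0 := by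
    simp only [hFdef, hgdef, Real.exp_zero, mul_one]
    have : 1 - p + p = 1 := by ring
    rw [this, Real.log_one]
    ring
  have hFnonneg : ∀ x, 0 ≤ F x := by
    intro x
    rcases le_total 0 x with hx | hx
    · have : MonotoneOn F (Set.Ici 0) := by
        apply monotoneOn_of_deriv_nonneg (convex_Ici 0)
        · exact fun y _ => ((hF y).differentiableAt.continuousAt).continuousWithinAt
        · intro y _
          exact (hF y).differentiableAt.differentiableWithinAt
        · intro y hy
          rw [interior_Ici] at hy
          rw [(hF y).deriv]
          rw [← hF'0]
          exact hmono (le_of_lt hy)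
      have := this (Set.self_mem_Ici) (Set.mem_Ici.mpr hx) hx
      rwa [hF0] at this
    · have : AntitoneOn F (Set.Iic 0) := by
        apply antitoneOn_of_deriv_nonpos (convex_Iic 0)
        · exact fun y _ => ((hF y).differentiableAt.continuousAt).continuousWithinAt
        · intro y _
          exact (hF y).differentiableAt.differentiableWithinAt
        · intro y hy
          rw [interior_Iic] at hy
          rw [(hF y).deriv]
          rw [← hF'0]
          exact hmono (le_of_lt hy)
      have := this (Set.mem_Iic.mpr hx) (Set.self_mem_Iic) hx
      rwa [hF0] at this
  have hlog : Real.log (g h) ≤ p * h + h ^ 2 / 8 := by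
    have := hFnonneg h
    simp only [hFdef] at this
    linarith
  calc g h = Real.exp (Real.log (g h)) := (Real.exp_log (hgpos h)).symm
    _ ≤ Real.exp (p * h + h ^ 2 / 8) := Real.exp_le_exp.mpr hlog

lemma tail_key7 {b s γ : ℝ} (hb : 0 < b) (hγ : 0 < γ) (hsB : b / (2 * γ) ≤ s) :
    -2 * s ^ 2 / b ≤ -b / (2 * γ ^ 2) := by
  rw [div_le_div_iff₀ hb (by positivity)]
  have h2 : b / 2 ≤ s * γ := by
    have := mul_le_mul_of_nonneg_right hsB hγ.le
    calc b / 2 = b / (2 * γ) * γ := by field_simp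
      _ ≤ s * γ := this
  have h3 : (b / 2) ^ 2 ≤ (s * γ) ^ 2 := pow_le_pow_left₀ (by positivity) h2 2
  nlinarith [h3]

/-- Hoeffding-type lower tail bound for binomial partial sums. -/
lemma binom_tail {B : ℕ} {p γ : ℝ} (hB : 1 ≤ B) (hγ : 1 ≤ γ)
    (hp1 : 1 / γ ≤ p) (hp2 : p ≤ 1) :
    ∑ j ∈ Finset.range ⌊(B : ℝ) / (2 * γ)⌋₊, (B.choose j : ℝ) * p ^ j * (1 - p) ^ (B - j)
      ≤ Real.exp (-(B : ℝ) / (2 * γ ^ 2)) := by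
  have hγ0 : (0 : ℝ) < γ := lt_of_lt_of_le one_pos hγ
  have hp0 : 0 ≤ p := le_trans (by positivity) hp1
  set m0 : ℕ := ⌊(B : ℝ) / (2 * γ)⌋₊ with hm0
  rcases Nat.eq_zero_or_pos m0 with h0 | hpos
  · rw [h0]
    simp only [Finset.range_zero, Finset.sum_empty]
    exact (Real.exp_pos _).le
  have hBr : (1 : ℝ) ≤ (B : ℝ) := by exact_mod_cast hB
  have hBr0 : (0 : ℝ) < (B : ℝ) := lt_of_lt_of_le one_pos hBr
  have hfloor : (m0 : ℝ) ≤ (B : ℝ) / (2 * γ) := Nat.floor_le (by positivity)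
  set y : ℝ := (m0 : ℝ) - 1 with hy
  set s : ℝ := (B : ℝ) * p - y with hs
  have hpB : (B : ℝ) / γ ≤ (B : ℝ) * p := by
    rw [div_eq_mul_inv, ← one_div]
    exact mul_le_mul_of_nonneg_left hp1 hBr0.le
  have hsge : (B : ℝ) / (2 * γ) + 1 ≤ s := by
    have h1 : (B : ℝ) / γ - (B : ℝ) / (2 * γ) = (B : ℝ) / (2 * γ) := by
      field_simp; ring
    have : (B : ℝ) / (2 * γ) + 1 ≤ (B : ℝ) / γ - y + 0 := by
      simp only [hy]
      have := hfloor
      linarith [h1]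
    calc (B : ℝ) / (2 * γ) + 1 ≤ (B : ℝ) / γ - y + 0 := this
      _ ≤ s := by simp only [hs]; linarith
  have hs0 : 0 < s := lt_of_lt_of_le (by positivity) hsge
  set lam : ℝ := 4 * s / (B : ℝ) with hlam
  have hlam0 : 0 < lam := by positivity
  have hm0B : m0 ≤ B := by
    have : (m0 : ℝ) ≤ (B : ℝ) := by
      calc (m0 : ℝ) ≤ (B : ℝ) / (2 * γ) := hfloor
        _ ≤ (B : ℝ) / 2 := by
          apply div_le_div_of_nonneg_left hBr0.le (by positivity)
          linarith
        _ ≤ (B : ℝ) := by linarith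
    exact_mod_cast this
  have key1 : ∑ j ∈ Finset.range m0, (B.choose j : ℝ) * p ^ j * (1 - p) ^ (B - j)
      ≤ ∑ j ∈ Finset.range m0,
          (B.choose j : ℝ) * p ^ j * (1 - p) ^ (B - j) * Real.exp (lam * (y - j)) := by
    apply Finset.sum_le_sum
    intro j hj
    have hjm : (j : ℝ) ≤ y := by
      rw [Finset.mem_range] at hj
      have : (j : ℝ) + 1 ≤ (m0 : ℝ) := by exact_mod_cast hj
      simp only [hy]; linarith
    have h1 : (1 : ℝ) ≤ Real.exp (lam * (y - j)) := by
      rw [← Real.exp_zero]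
      apply Real.exp_le_exp.mpr
      have : 0 ≤ y - j := by linarith
      positivity
    have hterm : 0 ≤ (B.choose j : ℝ) * p ^ j * (1 - p) ^ (B - j) := by
      have : 0 ≤ 1 - p := by linarith
      positivity
    nlinarith
  have key2 : ∑ j ∈ Finset.range m0,
        (B.choose j : ℝ) * p ^ j * (1 - p) ^ (B - j) * Real.exp (lam * (y - j))
      ≤ ∑ j ∈ Finset.range (B + 1),
          (B.choose j : ℝ) * p ^ j * (1 - p) ^ (B - j) * Real.exp (lam * (y - j)) := by
    apply Finset.sum_le_sum_of_subset_of_nonneg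
    · exact Finset.range_subset_range.mpr (by omega)
    · intro j _ _
      have : 0 ≤ 1 - p := by linarith
      positivity
  have key3 : ∑ j ∈ Finset.range (B + 1),
        (B.choose j : ℝ) * p ^ j * (1 - p) ^ (B - j) * Real.exp (lam * (y - j))
      = Real.exp (lam * y) * (p * Real.exp (-lam) + (1 - p)) ^ B := by
    rw [add_pow, Finset.mul_sum]
    apply Finset.sum_congr rfl
    intro j hj
    have hx : Real.exp (lam * (y - j)) = Real.exp (lam * y) * Real.exp (-lam) ^ j := by
      rw [← Real.exp_nat_mul, ← Real.exp_add]; congr 1; ring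
    rw [hx, mul_pow]; ring
  have key4 : (p * Real.exp (-lam) + (1 - p)) ^ B
      ≤ Real.exp (p * (-lam) + (-lam) ^ 2 / 8) ^ B := by
    apply pow_le_pow_left₀
    · have := gpos hp0 hp2 (-lam); linarith
    · have := hoeff_core hp0 hp2 (-lam); linarith
  have key5 : Real.exp (lam * y) * Real.exp (p * (-lam) + (-lam) ^ 2 / 8) ^ B
      = Real.exp (-lam * s + lam ^ 2 * (B : ℝ) / 8) := by
    rw [← Real.exp_nat_mul, ← Real.exp_add]
    congr 1
    simp only [hs]
    ring
  have key6 : -lam * s + lam ^ 2 * (B : ℝ) / 8 = -2 * s ^ 2 / (B : ℝ) := by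
    simp only [hlam]
    field_simp
    ring
  have key7 : -2 * s ^ 2 / (B : ℝ) ≤ -(B : ℝ) / (2 * γ ^ 2) :=
    tail_key7 hBr0 hγ0 (by linarith)
  calc ∑ j ∈ Finset.range m0, (B.choose j : ℝ) * p ^ j * (1 - p) ^ (B - j)
      ≤ Real.exp (lam * y) * (p * Real.exp (-lam) + (1 - p)) ^ B := by
        rw [← key3]; exact le_trans key1 key2
    _ ≤ Real.exp (lam * y) * Real.exp (p * (-lam) + (-lam) ^ 2 / 8) ^ B := by
        apply mul_le_mul_of_nonneg_left key4 (Real.exp_pos _).le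
    _ = Real.exp (-2 * s ^ 2 / (B : ℝ)) := by rw [key5, key6]
    _ ≤ Real.exp (-(B : ℝ) / (2 * γ ^ 2)) := Real.exp_le_exp.mpr key7

end Helpers

section Hoeff
variable {Ω : Type*} {mΩ : MeasurableSpace Ω} {μ : Measure Ω} [IsProbabilityMeasure μ]

lemma integrable_of_ae_bounded {X : Ω → ℝ} (hX : Measurable X) {C : ℝ}
    (h : ∀ᵐ ω ∂μ, |X ω| ≤ C) : Integrable X μ :=
  Integrable.mono' (integrable_const C) hX.aestronglyMeasurable h

/-- Hoeffding's lemma. -/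
lemma hoeff_mgf {X : Ω → ℝ} (hX : Measurable X) {a b : ℝ}
    (hab : a < b) (hbd : ∀ᵐ ω ∂μ, X ω ∈ Set.Icc a b) (t : ℝ) :
    ∫ ω, Real.exp (t * X ω) ∂μ
      ≤ Real.exp (t * ∫ ω, X ω ∂μ + t ^ 2 * (b - a) ^ 2 / 8) := by
  have hintX : Integrable X μ := by
    apply integrable_of_ae_bounded hX (C := max |a| |b|)
    filter_upwards [hbd] with ω hω
    rw [abs_le]
    constructor
    · calc -(max |a| |b|) ≤ -|a| := by simp
        _ ≤ a := neg_abs_le a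
        _ ≤ X ω := hω.1
    · calc X ω ≤ b := hω.2
        _ ≤ |b| := le_abs_self b
        _ ≤ max |a| |b| := le_max_right _ _
  set μ0 : ℝ := ∫ ω, X ω ∂μ with hμ0
  have hμ0a : a ≤ μ0 := by
    have : ∫ _ω, a ∂μ ≤ ∫ ω, X ω ∂μ := by
      apply integral_mono_ae (integrable_const a) hintX
      filter_upwards [hbd] with ω hω using hω.1
    simpa using this
  have hμ0b : μ0 ≤ b := by
    have : ∫ ω, X ω ∂μ ≤ ∫ _ω, b ∂μ := by
      apply integral_mono_ae hintX (integrable_const b)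
      filter_upwards [hbd] with ω hω using hω.2
    simpa using this
  have hr : (0 : ℝ) < b - a := by linarith
  set c1 : ℝ := (b * Real.exp (t * a) - a * Real.exp (t * b)) / (b - a) with hc1
  set c2 : ℝ := (Real.exp (t * b) - Real.exp (t * a)) / (b - a) with hc2
  have hpt : ∀ x, x ∈ Set.Icc a b → Real.exp (t * x) ≤ c1 + c2 * x := by
    intro x hx
    have hθ : 0 ≤ (b - x) / (b - a) := by
      apply div_nonneg _ hr.le; linarith [hx.2]
    have h1θ : 0 ≤ (x - a) / (b - a) := by
      apply div_nonneg _ hr.le; linarith [hx.1]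
    have hsum : (b - x) / (b - a) + (x - a) / (b - a) = 1 := by
      field_simp
      ring
    have hconv := convexOn_exp.2 (Set.mem_univ (t * a)) (Set.mem_univ (t * b)) hθ h1θ hsum
    have harg : ((b - x) / (b - a)) • (t * a) + ((x - a) / (b - a)) • (t * b) = t * x := by
      simp only [smul_eq_mul]
      field_simp
      ring
    rw [harg] at hconv
    calc Real.exp (t * x)
        ≤ (b - x) / (b - a) * Real.exp (t * a) + (x - a) / (b - a) * Real.exp (t * b) := by
          simpa using hconv
      _ = c1 + c2 * x := by
          simp only [hc1, hc2]
          field_simp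
          ring
  have hint_exp : Integrable (fun ω => Real.exp (t * X ω)) μ := by
    apply integrable_of_ae_bounded ((hX.const_mul t).exp) (C := Real.exp (t * a) + Real.exp (t * b))
    filter_upwards [hbd] with ω hω
    rw [abs_of_pos (Real.exp_pos _)]
    rcases le_total (t * X ω) (t * a) with h | h
    · have := Real.exp_le_exp.mpr h
      linarith [Real.exp_pos (t * b)]
    · rcases le_total 0 t with ht | ht
      · have h2 : t * X ω ≤ t * b := mul_le_mul_of_nonneg_left hω.2 ht
        have := Real.exp_le_exp.mpr h2
        linarith [Real.exp_pos (t * a)]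
      · have h2 : t * X ω ≤ t * a := mul_le_mul_of_nonpos_left hω.1 ht
        have := Real.exp_le_exp.mpr h2
        linarith [Real.exp_pos (t * b)]
  have step1 : ∫ ω, Real.exp (t * X ω) ∂μ ≤ c1 + c2 * μ0 := by
    have hrhs : Integrable (fun ω => c1 + c2 * X ω) μ :=
      (integrable_const c1).add (hintX.const_mul c2)
    calc ∫ ω, Real.exp (t * X ω) ∂μ ≤ ∫ ω, (c1 + c2 * X ω) ∂μ := by
          apply integral_mono_ae hint_exp hrhs
          filter_upwards [hbd] with ω hω using hpt (X ω) hω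
      _ = c1 + c2 * μ0 := by
          rw [integral_add (integrable_const c1) (hintX.const_mul c2),
            integral_const_mul]
          simp [hμ0]
  set p : ℝ := (μ0 - a) / (b - a) with hp
  have hp0 : 0 ≤ p := by apply div_nonneg _ hr.le; linarith
  have hp1 : p ≤ 1 := by rw [div_le_one hr]; linarith
  have step2 : c1 + c2 * μ0 = Real.exp (t * a) * (1 - p + p * Real.exp (t * (b - a))) := by
    have he : Real.exp (t * b) = Real.exp (t * a) * Real.exp (t * (b - a)) := by
      rw [← Real.exp_add]; congr 1; ring
    simp only [hc1, hc2, hp, he]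
    field_simp
    ring
  have step3 : Real.exp (t * a) * (1 - p + p * Real.exp (t * (b - a)))
      ≤ Real.exp (t * μ0 + t ^ 2 * (b - a) ^ 2 / 8) := by
    calc Real.exp (t * a) * (1 - p + p * Real.exp (t * (b - a)))
        ≤ Real.exp (t * a) * Real.exp (p * (t * (b - a)) + (t * (b - a)) ^ 2 / 8) := by
          apply mul_le_mul_of_nonneg_left (hoeff_core hp0 hp1 _) (Real.exp_pos _).le
      _ = Real.exp (t * a + p * (t * (b - a)) + (t * (b - a)) ^ 2 / 8) := by
          rw [← Real.exp_add]; congr 1; ring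
      _ = Real.exp (t * μ0 + t ^ 2 * (b - a) ^ 2 / 8) := by
          congr 1
          have hpe : p * (t * (b - a)) = t * (μ0 - a) := by
            simp only [hp]; field_simp
          rw [hpe]; ring
  calc ∫ ω, Real.exp (t * X ω) ∂μ ≤ c1 + c2 * μ0 := step1
    _ = Real.exp (t * a) * (1 - p + p * Real.exp (t * (b - a))) := step2
    _ ≤ Real.exp (t * μ0 + t ^ 2 * (b - a) ^ 2 / 8) := step3

end Hoeff

section D
variable {Ω : Type*} {mΩ : MeasurableSpace Ω} {μ : Measure Ω} [IsProbabilityMeasure μ]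

lemma hoeff_mgf_centered {X : Ω → ℝ} (hX : Measurable X) {a b μ0 : ℝ}
    (hab : a < b) (hbd : ∀ᵐ ω ∂μ, X ω ∈ Set.Icc a b)
    (hmean : ∫ ω, X ω ∂μ = μ0) (t : ℝ) :
    mgf (fun ω => X ω - μ0) μ t ≤ Real.exp (t ^ 2 * (b - a) ^ 2 / 8) := by
  have h2 : ∀ ω, Real.exp (t * (X ω - μ0)) = Real.exp (t * X ω) * Real.exp (-(t * μ0)) := by
    intro ω
    rw [← Real.exp_add]
    congr 1
    ring
  have key : mgf (fun ω => X ω - μ0) μ t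
      = (∫ ω, Real.exp (t * X ω) ∂μ) * Real.exp (-(t * μ0)) := by
    calc mgf (fun ω => X ω - μ0) μ t
        = ∫ ω, Real.exp (t * X ω) * Real.exp (-(t * μ0)) ∂μ := by
          unfold mgf
          exact integral_congr_ae (Filter.Eventually.of_forall h2)
      _ = (∫ ω, Real.exp (t * X ω) ∂μ) * Real.exp (-(t * μ0)) := integral_mul_const _ _
  rw [key]
  have h1 := hoeff_mgf hX hab hbd t
  rw [hmean] at h1
  calc (∫ ω, Real.exp (t * X ω) ∂μ) * Real.exp (-(t * μ0))
      ≤ Real.exp (t * μ0 + t ^ 2 * (b - a) ^ 2 / 8) * Real.exp (-(t * μ0)) := by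
        apply mul_le_mul_of_nonneg_right h1 (Real.exp_pos _).le
    _ = Real.exp (t ^ 2 * (b - a) ^ 2 / 8) := by
        rw [← Real.exp_add]; congr 1; ring

lemma hoeff_sum_tail {X : ℕ → Ω → ℝ} (hmeas : ∀ m, Measurable (X m))
    (hindep : iIndepFun (m := fun _ => inferInstance) X μ)
    {a b μ0 : ℝ} (hab : a < b) (hbd : ∀ m, ∀ᵐ ω ∂μ, X m ω ∈ Set.Icc a b)
    (hmean : ∀ m, ∫ ω, X m ω ∂μ = μ0) (c : ℕ) {t0 : ℝ} (ht0 : 0 ≤ t0) :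
    (μ {ω | (c : ℝ) * t0 ≤ ∑ m ∈ Finset.range c, (X m ω - μ0)}).toReal
      ≤ Real.exp (-2 * c * t0 ^ 2 / (b - a) ^ 2) := by
  have hr : (0 : ℝ) < b - a := by linarith
  set Y : ℕ → Ω → ℝ := fun m ω => X m ω - μ0 with hY
  have hYmeas : ∀ m, Measurable (Y m) := fun m => (hmeas m).sub measurable_const
  have hYindep : iIndepFun (m := fun _ => inferInstance) Y μ := by
    have := hindep.comp (fun _ => fun x : ℝ => x - μ0)
      (fun _ => measurable_id.sub measurable_const)
    exact this
  set lam : ℝ := 4 * t0 / (b - a) ^ 2 with hlam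
  have hlam0 : 0 ≤ lam := by positivity
  set D : ℝ := max |a| |b| + |μ0| with hD
  have hbdY : ∀ m, ∀ᵐ ω ∂μ, |Y m ω| ≤ D := by
    intro m
    filter_upwards [hbd m] with ω hω
    have h1 : |X m ω| ≤ max |a| |b| := by
      rw [abs_le]
      constructor
      · calc -(max |a| |b|) ≤ -|a| := by simp
          _ ≤ a := neg_abs_le a
          _ ≤ X m ω := hω.1
      · calc X m ω ≤ b := hω.2
          _ ≤ |b| := le_abs_self b
          _ ≤ max |a| |b| := le_max_right _ _
    calc |Y m ω| ≤ |X m ω| + |μ0| := abs_sub _ _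
      _ ≤ D := by simp only [hD]; linarith
  have heqsum : (∑ m ∈ Finset.range c, Y m) = fun ω => ∑ m ∈ Finset.range c, Y m ω := by
    funext ω
    simp [Finset.sum_apply]
  have hsum_meas : Measurable (∑ m ∈ Finset.range c, Y m) := by
    rw [heqsum]
    exact Finset.measurable_sum _ (fun m _ => hYmeas m)
  have hint : Integrable (fun ω => Real.exp (lam * (∑ m ∈ Finset.range c, Y m) ω)) μ := by
    apply Integrable.mono' (integrable_const (Real.exp (lam * (c * D))))
    · exact ((hsum_meas.const_mul lam).exp).aestronglyMeasurable
    · have hall : ∀ᵐ ω ∂μ, ∀ m, |Y m ω| ≤ D := ae_all_iff.mpr hbdY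
      filter_upwards [hall] with ω hω
      rw [Real.norm_eq_abs, abs_of_pos (Real.exp_pos _), Real.exp_le_exp]
      apply mul_le_mul_of_nonneg_left _ hlam0
      calc (∑ m ∈ Finset.range c, Y m) ω = ∑ m ∈ Finset.range c, Y m ω := by
            simp [Finset.sum_apply]
        _ ≤ |∑ m ∈ Finset.range c, Y m ω| := le_abs_self _
        _ ≤ ∑ m ∈ Finset.range c, |Y m ω| := Finset.abs_sum_le_sum_abs _ _
        _ ≤ ∑ _m ∈ Finset.range c, D := Finset.sum_le_sum (fun m _ => hω m)
        _ = c * D := by simp [mul_comm]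
  have hch := measure_ge_le_exp_mul_mgf (μ := μ) (X := ∑ m ∈ Finset.range c, Y m)
    ((c : ℝ) * t0) hlam0 hint
  have hset : {ω | (c : ℝ) * t0 ≤ ∑ m ∈ Finset.range c, (X m ω - μ0)}
      = {ω | (c : ℝ) * t0 ≤ (∑ m ∈ Finset.range c, Y m) ω} := by
    ext ω; simp [Finset.sum_apply, hY]
  rw [hset]
  have hmgf : mgf (∑ m ∈ Finset.range c, Y m) μ lam
      ≤ Real.exp (lam ^ 2 * (b - a) ^ 2 / 8) ^ c := by
    rw [hYindep.mgf_sum hYmeas]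
    calc ∏ m ∈ Finset.range c, mgf (Y m) μ lam
        ≤ ∏ _m ∈ Finset.range c, Real.exp (lam ^ 2 * (b - a) ^ 2 / 8) := by
          apply Finset.prod_le_prod
          · intro m _; exact mgf_nonneg
          · intro m _
            exact hoeff_mgf_centered (hmeas m) hab (hbd m) (hmean m) lam
      _ = Real.exp (lam ^ 2 * (b - a) ^ 2 / 8) ^ c := by
          rw [Finset.prod_const, Finset.card_range]
  calc (μ {ω | (c : ℝ) * t0 ≤ (∑ m ∈ Finset.range c, Y m) ω}).toReal
      ≤ Real.exp (-lam * ((c : ℝ) * t0)) * mgf (∑ m ∈ Finset.range c, Y m) μ lam := hch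
    _ ≤ Real.exp (-lam * ((c : ℝ) * t0)) * Real.exp (lam ^ 2 * (b - a) ^ 2 / 8) ^ c := by
        apply mul_le_mul_of_nonneg_left hmgf (Real.exp_pos _).le
    _ = Real.exp (-lam * ((c : ℝ) * t0) + (c : ℝ) * (lam ^ 2 * (b - a) ^ 2 / 8)) := by
        rw [← Real.exp_nat_mul, ← Real.exp_add]
    _ = Real.exp (-2 * c * t0 ^ 2 / (b - a) ^ 2) := by
        congr 1
        simp only [hlam]
        field_simp
        ring

lemma hoeff_mean_tail {X : ℕ → Ω → ℝ} (hmeas : ∀ m, Measurable (X m))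
    (hindep : iIndepFun (m := fun _ => inferInstance) X μ)
    {a b μ0 : ℝ} (hab : a < b) (hbd : ∀ m, ∀ᵐ ω ∂μ, X m ω ∈ Set.Icc a b)
    (hmean : ∀ m, ∫ ω, X m ω ∂μ = μ0) (c : ℕ) {t0 : ℝ} (ht0 : 0 ≤ t0) :
    (μ {ω | (c : ℝ) * t0 ≤ |(∑ m ∈ Finset.range c, X m ω) - (c : ℝ) * μ0|}).toReal
      ≤ 2 * Real.exp (-2 * c * t0 ^ 2 / (b - a) ^ 2) := by
  set A : Set Ω := {ω | (c : ℝ) * t0 ≤ ∑ m ∈ Finset.range c, (X m ω - μ0)} with hA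
  set Bs : Set Ω := {ω | (c : ℝ) * t0 ≤ ∑ m ∈ Finset.range c, ((-X m ω) - (-μ0))} with hB
  have hsub : {ω | (c : ℝ) * t0 ≤ |(∑ m ∈ Finset.range c, X m ω) - (c : ℝ) * μ0|} ⊆ A ∪ Bs := by
    intro ω hω
    simp only [Set.mem_setOf_eq] at hω
    have hkey : (∑ m ∈ Finset.range c, X m ω) - (c : ℝ) * μ0
        = ∑ m ∈ Finset.range c, (X m ω - μ0) := by
      rw [Finset.sum_sub_distrib, Finset.sum_const, Finset.card_range]
      simp [nsmul_eq_mul]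
    rcases le_abs'.mp hω with h | h
    · right
      simp only [hB, Set.mem_setOf_eq]
      have : ∑ m ∈ Finset.range c, ((-X m ω) - (-μ0))
          = -∑ m ∈ Finset.range c, (X m ω - μ0) := by
        rw [← Finset.sum_neg_distrib]
        apply Finset.sum_congr rfl
        intro m _; ring
      rw [this, ← hkey]
      linarith
    · left
      simp only [hA, Set.mem_setOf_eq]
      rw [← hkey]
      exact h
  have hAbound : (μ A).toReal ≤ Real.exp (-2 * c * t0 ^ 2 / (b - a) ^ 2) :=
    hoeff_sum_tail hmeas hindep hab hbd hmean c ht0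
  have hBbound : (μ Bs).toReal ≤ Real.exp (-2 * c * t0 ^ 2 / (b - a) ^ 2) := by
    have hmeas' : ∀ m, Measurable (fun ω => -X m ω) := fun m => (hmeas m).neg
    have hindep' : iIndepFun (m := fun _ => inferInstance) (fun m ω => -X m ω) μ := by
      have := hindep.comp (fun _ => fun x : ℝ => -x) (fun _ => measurable_neg)
      exact this
    have hab' : -b < -a := by linarith
    have hbd' : ∀ m, ∀ᵐ ω ∂μ, -X m ω ∈ Set.Icc (-b) (-a) := by
      intro m
      filter_upwards [hbd m] with ω hω
      exact ⟨by linarith [hω.2], by linarith [hω.1]⟩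
    have hmean' : ∀ m, ∫ ω, -X m ω ∂μ = -μ0 := by
      intro m
      rw [integral_neg, hmean m]
    have := hoeff_sum_tail hmeas' hindep' hab' hbd' hmean' c ht0
    have heq : (-a - -b) = b - a := by ring
    rwa [heq] at this
  calc (μ {ω | (c : ℝ) * t0 ≤ |(∑ m ∈ Finset.range c, X m ω) - (c : ℝ) * μ0|}).toReal
      ≤ ((μ A) + (μ Bs)).toReal := by
        apply ENNReal.toReal_mono
        · exact ENNReal.add_ne_top.mpr ⟨measure_ne_top μ A, measure_ne_top μ Bs⟩
        · exact le_trans (measure_mono hsub) (measure_union_le A Bs)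
    _ = (μ A).toReal + (μ Bs).toReal :=
        ENNReal.toReal_add (measure_ne_top μ A) (measure_ne_top μ Bs)
    _ ≤ 2 * Real.exp (-2 * c * t0 ^ 2 / (b - a) ^ 2) := by linarith

end D

section Strata
variable {n : ℕ} {K W : Finset (Fin n)} {ℓ : ℕ} {ν : Finset (Fin n) → ℝ}

lemma strata_eq : strata n K ℓ = Finset.powersetCard ℓ Kᶜ :=
  Finset.powersetCard_eq_filter.symm

lemma card_strata : (strata n K ℓ).card = (n - K.card).choose ℓ := by
  rw [strata_eq, Finset.card_powersetCard, Finset.card_compl, Fintype.card_fin]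

lemma strata_nonempty (hℓ : ℓ ≤ n - K.card) : (strata n K ℓ).Nonempty := by
  rw [← Finset.card_pos, card_strata]
  exact Nat.choose_pos hℓ

lemma stratRange_eq (hne : (strata n K ℓ).Nonempty) :
    stratRange n ν K W ℓ = (strata n K ℓ).sup' hne (fun S => ν (S ∪ W))
      - (strata n K ℓ).inf' hne (fun S => ν (S ∪ W)) := by
  rw [stratRange, Finset.sup'_eq_csSup_image _ hne, Finset.inf'_eq_csInf_image _ hne]

lemma stratRange_nonneg (hne : (strata n K ℓ).Nonempty) : 0 ≤ stratRange n ν K W ℓ := by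
  rw [stratRange_eq hne]
  obtain ⟨T, hT⟩ := id hne
  have h1 : (strata n K ℓ).inf' hne (fun S => ν (S ∪ W)) ≤ ν (T ∪ W) :=
    Finset.inf'_le (fun S => ν (S ∪ W)) hT
  have h2 : ν (T ∪ W) ≤ (strata n K ℓ).sup' hne (fun S => ν (S ∪ W)) :=
    Finset.le_sup' (fun S => ν (S ∪ W)) hT
  linarith

end Strata

section Prob
variable {Ω : Type*} [MeasureSpace Ω] [IsProbabilityMeasure (ℙ : Measure Ω)]
  {n : ℕ} {K W : Finset (Fin n)} {ℓ : ℕ} {ν : Finset (Fin n) → ℝ}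

/-- Samples are a.s. in the stratum. -/
lemma unif_ae_mem {f : Ω → Finset (Fin n)}
    (hunif : ∀ T : Finset (Fin n), ℙ {ω | f ω = T}
      = if T ∈ strata n K ℓ then ((strata n K ℓ).card : ℝ≥0∞)⁻¹ else 0) :
    ∀ᵐ ω ∂(ℙ : Measure Ω), f ω ∈ strata n K ℓ := by
  rw [ae_iff]
  have hsub : {ω | ¬ f ω ∈ strata n K ℓ}
      ⊆ ⋃ T ∈ (Finset.univ \ strata n K ℓ : Finset (Finset (Fin n))), {ω | f ω = T} := by
    intro ω hω
    simp only [Set.mem_setOf_eq] at hω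
    apply Set.mem_biUnion (show f ω ∈ (Finset.univ \ strata n K ℓ : Finset (Finset (Fin n))) by
      simp [hω])
    rfl
  refine le_antisymm ?_ zero_le
  calc ℙ {ω | ¬ f ω ∈ strata n K ℓ}
      ≤ ∑ T ∈ (Finset.univ \ strata n K ℓ), ℙ {ω | f ω = T} :=
        le_trans (measure_mono hsub) (measure_biUnion_finset_le _ _)
    _ = 0 := by
        apply Finset.sum_eq_zero
        intro T hT
        rw [hunif T, if_neg]
        simp only [Finset.mem_sdiff] at hT
        exact hT.2

/-- The mean of a uniform sample value is the stratum value. -/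
lemma unif_mean {f : Ω → Finset (Fin n)} (hf : Measurable f)
    (hunif : ∀ T : Finset (Fin n), ℙ {ω | f ω = T}
      = if T ∈ strata n K ℓ then ((strata n K ℓ).card : ℝ≥0∞)⁻¹ else 0)
    (hℓ : ℓ ≤ n - K.card) :
    ∫ ω, ν (f ω ∪ W) ∂(ℙ : Measure Ω) = stratVal n ν K W ℓ := by
  have hne := strata_nonempty (K := K) (n := n) hℓ
  have hcard : (strata n K ℓ).card ≠ 0 := Finset.card_ne_zero.mpr hne
  have hpt : ∀ ω, ν (f ω ∪ W) = ∑ T ∈ (Finset.univ : Finset (Finset (Fin n))),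
      Set.indicator {ω' | f ω' = T} (fun _ => ν (T ∪ W)) ω := by
    intro ω
    rw [Finset.sum_indicator_eq_sum_filter]
    have : Finset.filter (fun T => ω ∈ {ω' | f ω' = T}) Finset.univ = {f ω} := by
      ext T
      simp [eq_comm, Set.mem_setOf_eq]
    rw [this, Finset.sum_singleton]
  have hmeassets : ∀ T : Finset (Fin n), MeasurableSet {ω | f ω = T} := by
    intro T
    have : {ω | f ω = T} = f ⁻¹' {T} := rfl
    rw [this]
    exact hf trivial
  calc ∫ ω, ν (f ω ∪ W) ∂(ℙ : Measure Ω)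
      = ∫ ω, ∑ T ∈ (Finset.univ : Finset (Finset (Fin n))),
          Set.indicator {ω' | f ω' = T} (fun _ => ν (T ∪ W)) ω ∂(ℙ : Measure Ω) := by
        exact integral_congr_ae (Filter.Eventually.of_forall hpt)
    _ = ∑ T ∈ (Finset.univ : Finset (Finset (Fin n))),
          ∫ ω, Set.indicator {ω' | f ω' = T} (fun _ => ν (T ∪ W)) ω ∂(ℙ : Measure Ω) := by
        apply integral_finset_sum
        intro T _
        exact (integrable_const _).indicator (hmeassets T)
    _ = ∑ T ∈ (Finset.univ : Finset (Finset (Fin n))),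
          (ℙ {ω | f ω = T}).toReal * ν (T ∪ W) := by
        apply Finset.sum_congr rfl
        intro T _
        rw [integral_indicator_const _ (hmeassets T)]
        simp [mul_comm, measureReal_def]
    _ = ∑ T ∈ strata n K ℓ, (((strata n K ℓ).card : ℝ))⁻¹ * ν (T ∪ W) := by
        rw [← Finset.sum_filter_of_ne (f := fun T => (ℙ {ω | f ω = T}).toReal * ν (T ∪ W))
          (p := fun T => T ∈ strata n K ℓ)]
        · rw [Finset.filter_mem_eq_inter, Finset.univ_inter]
          apply Finset.sum_congr rfl
          intro T hT
          rw [hunif T, if_pos hT]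
          congr 1
          rw [ENNReal.toReal_inv]
          simp
        · intro T _ hne'
          by_contra hmem
          apply hne'
          rw [hunif T, if_neg hmem] at hne'
          simp at hne'
    _ = stratVal n ν K W ℓ := by
        rw [stratVal, Finset.mul_sum, card_strata]
end Prob

section Count
variable {Ω : Type*} [MeasureSpace Ω] [IsProbabilityMeasure (ℙ : Measure Ω)]
  {Mf : Ω → ℕ} {B : ℕ} {p γ : ℝ}

lemma binom_pmf_sum (hB : 1 ≤ B) (hγ : 1 ≤ γ) (hp1 : 1 / γ ≤ p) (hp2 : p ≤ 1)
    (hbin : ∀ j : ℕ, ℙ {ω | Mf ω = j + 1}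
      = ENNReal.ofReal ((B.choose j : ℝ) * p ^ j * (1 - p) ^ (B - j))) :
    ∑' j : ℕ, ℙ {ω | Mf ω = j + 1} = 1 := by
  have hγ0 : (0:ℝ) < γ := lt_of_lt_of_le one_pos hγ
  have hp0 : 0 ≤ p := le_trans (by positivity) hp1
  have h1p : 0 ≤ 1 - p := by linarith
  have hzero : ∀ j ∉ Finset.range (B + 1), ℙ {ω | Mf ω = j + 1} = 0 := by
    intro j hj
    rw [Finset.mem_range, not_lt] at hj
    rw [hbin j, Nat.choose_eq_zero_of_lt (by omega)]
    simp
  rw [tsum_eq_sum hzero]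
  have hsum : ∑ j ∈ Finset.range (B + 1), (B.choose j : ℝ) * p ^ j * (1 - p) ^ (B - j)
      = 1 := by
    have h := add_pow p (1 - p) B
    simp only [add_sub_cancel, one_pow] at h
    calc ∑ j ∈ Finset.range (B + 1), (B.choose j : ℝ) * p ^ j * (1 - p) ^ (B - j)
        = ∑ j ∈ Finset.range (B + 1), p ^ j * (1 - p) ^ (B - j) * (B.choose j : ℝ) :=
          Finset.sum_congr rfl (fun j _ => by ring)
      _ = 1 := h.symm
  calc ∑ j ∈ Finset.range (B + 1), ℙ {ω | Mf ω = j + 1}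
      = ∑ j ∈ Finset.range (B + 1),
          ENNReal.ofReal ((B.choose j : ℝ) * p ^ j * (1 - p) ^ (B - j)) := by
        exact Finset.sum_congr rfl (fun j _ => hbin j)
    _ = ENNReal.ofReal (∑ j ∈ Finset.range (B + 1),
          (B.choose j : ℝ) * p ^ j * (1 - p) ^ (B - j)) := by
        rw [ENNReal.ofReal_sum_of_nonneg]
        intro j _
        positivity
    _ = 1 := by rw [hsum]; simp

lemma M_zero_aux (hMmeas : Measurable Mf) (hsum : ∑' j : ℕ, ℙ {ω | Mf ω = j + 1} = 1) :
    ℙ {ω | Mf ω = 0} = 0 := by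
  have hmeas : ∀ c : ℕ, MeasurableSet {ω | Mf ω = c} := by
    intro c
    have h : {ω | Mf ω = c} = Mf ⁻¹' {c} := rfl
    rw [h]
    exact hMmeas (measurableSet_singleton c)
  have hdisj : Pairwise (Function.onFun Disjoint (fun c => {ω | Mf ω = c})) := by
    intro i j hij
    apply Set.disjoint_left.mpr
    intro ω hi hj
    exact hij (hi.symm.trans hj)
  have huniv : (⋃ c : ℕ, {ω | Mf ω = c}) = Set.univ := by
    ext ω; simp
  have hone : (1 : ℝ≥0∞) = ∑' c : ℕ, ℙ {ω | Mf ω = c} := by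
    rw [← measure_iUnion hdisj hmeas, huniv, measure_univ]
  have hUmeas : MeasurableSet (⋃ j : ℕ, {ω | Mf ω = j + 1}) :=
    MeasurableSet.iUnion (fun j => hmeas (j + 1))
  have hU : ℙ (⋃ j : ℕ, {ω | Mf ω = j + 1}) = 1 := by
    have hdisj' : Pairwise (Function.onFun Disjoint (fun j : ℕ => {ω | Mf ω = j + 1})) :=
      fun i j hij => hdisj (show i + 1 ≠ j + 1 by omega)
    rw [measure_iUnion hdisj' (fun j => hmeas (j + 1))]
    exact hsum
  have hdisj0 : Disjoint {ω | Mf ω = 0} (⋃ j : ℕ, {ω | Mf ω = j + 1}) := by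
    apply Set.disjoint_left.mpr
    intro ω h0 hU'
    simp only [Set.mem_setOf_eq] at h0
    obtain ⟨j, hj⟩ := Set.mem_iUnion.mp hU'
    simp only [Set.mem_setOf_eq] at hj
    omega
  have hle : ℙ {ω | Mf ω = 0} + 1 ≤ 1 := by
    calc ℙ {ω | Mf ω = 0} + 1 = ℙ {ω | Mf ω = 0} + ℙ (⋃ j : ℕ, {ω | Mf ω = j + 1}) := by
          rw [hU]
      _ = ℙ ({ω | Mf ω = 0} ∪ ⋃ j : ℕ, {ω | Mf ω = j + 1}) :=
          (measure_union hdisj0 hUmeas).symm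
      _ ≤ 1 := prob_le_one
  have : ℙ {ω | Mf ω = 0} + 1 ≤ 0 + 1 := by rwa [zero_add]
  have := (ENNReal.add_le_add_iff_right ENNReal.one_ne_top).mp this
  exact le_antisymm this zero_le
lemma M_zero (hMmeas : Measurable Mf) (hB : 1 ≤ B) (hγ : 1 ≤ γ)
    (hp1 : 1 / γ ≤ p) (hp2 : p ≤ 1)
    (hbin : ∀ j : ℕ, ℙ {ω | Mf ω = j + 1}
      = ENNReal.ofReal ((B.choose j : ℝ) * p ^ j * (1 - p) ^ (B - j))) :
    ℙ {ω | Mf ω = 0} = 0 :=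
  M_zero_aux hMmeas (binom_pmf_sum hB hγ hp1 hp2 hbin)

lemma M_small (hMmeas : Measurable Mf) (hB : 1 ≤ B) (hγ : 1 ≤ γ)
    (hp1 : 1 / γ ≤ p) (hp2 : p ≤ 1)
    (hbin : ∀ j : ℕ, ℙ {ω | Mf ω = j + 1}
      = ENNReal.ofReal ((B.choose j : ℝ) * p ^ j * (1 - p) ^ (B - j))) :
    ℙ {ω | Mf ω ≤ ⌊(B : ℝ) / (2 * γ)⌋₊}
      ≤ ENNReal.ofReal (Real.exp (-(B : ℝ) / (2 * γ ^ 2))) := by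
  set m0 := ⌊(B : ℝ) / (2 * γ)⌋₊ with hm0
  have hγ0 : (0:ℝ) < γ := lt_of_lt_of_le one_pos hγ
  have hp0 : 0 ≤ p := le_trans (by positivity) hp1
  have h1p : 0 ≤ 1 - p := by linarith
  have hsub : {ω | Mf ω ≤ m0} ⊆ ⋃ c ∈ Finset.range (m0 + 1), {ω | Mf ω = c} := by
    intro ω hω
    simp only [Set.mem_setOf_eq] at hω
    apply Set.mem_biUnion (show Mf ω ∈ Finset.range (m0 + 1) by
      rw [Finset.mem_range]; omega)
    rfl
  calc ℙ {ω | Mf ω ≤ m0}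
      ≤ ∑ c ∈ Finset.range (m0 + 1), ℙ {ω | Mf ω = c} :=
        le_trans (measure_mono hsub) (measure_biUnion_finset_le _ _)
    _ = ℙ {ω | Mf ω = 0} + ∑ j ∈ Finset.range m0, ℙ {ω | Mf ω = j + 1} := by
        rw [Finset.sum_range_succ', add_comm]
    _ = ∑ j ∈ Finset.range m0,
          ENNReal.ofReal ((B.choose j : ℝ) * p ^ j * (1 - p) ^ (B - j)) := by
        rw [M_zero hMmeas hB hγ hp1 hp2 hbin, zero_add]
        exact Finset.sum_congr rfl (fun j _ => hbin j)
    _ = ENNReal.ofReal (∑ j ∈ Finset.range m0,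
          (B.choose j : ℝ) * p ^ j * (1 - p) ^ (B - j)) := by
        rw [ENNReal.ofReal_sum_of_nonneg]
        intro j _
        positivity
    _ ≤ ENNReal.ofReal (Real.exp (-(B : ℝ) / (2 * γ ^ 2))) := by
        apply ENNReal.ofReal_le_ofReal
        exact binom_tail hB hγ hp1 hp2

end Count

section StratumBound
variable {Ω : Type*} [MeasureSpace Ω] [IsProbabilityMeasure (ℙ : Measure Ω)]
  {n : ℕ} {K W : Finset (Fin n)} {ℓ : ℕ} {ν : Finset (Fin n) → ℝ}
/-- Tail bound for a single estimated stratum. -/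
lemma stratum_bound
    {Sf : ℕ → Ω → Finset (Fin n)} {Mf : Ω → ℕ} {B : ℕ} {p γ : ℝ}
    (hSmeas : ∀ m, Measurable (Sf m)) (hMmeas : Measurable Mf)
    (hiid : iIndepFun (m := fun _ => finsetMeasurableSpace n) Sf (ℙ : Measure Ω))
    (hunif : ∀ (m : ℕ) (T : Finset (Fin n)), ℙ {ω | Sf m ω = T}
      = if T ∈ strata n K ℓ then ((strata n K ℓ).card : ℝ≥0∞)⁻¹ else 0)
    (hB : 1 ≤ B) (hγ : 1 ≤ γ) (hp1 : 1 / γ ≤ p) (hp2 : p ≤ 1)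
    (hbin : ∀ j : ℕ, ℙ {ω | Mf ω = j + 1}
      = ENNReal.ofReal ((B.choose j : ℝ) * p ^ j * (1 - p) ^ (B - j)))
    (hℓ : ℓ ≤ n - K.card) {t0 : ℝ} (ht0 : 0 < t0) (hr : 0 < stratRange n ν K W ℓ)
    {a : ℝ} (ha : a = 2 * t0 ^ 2 / stratRange n ν K W ℓ ^ 2) :
    ℙ {ω | t0 ≤ |((Mf ω : ℝ))⁻¹ * ∑ m ∈ Finset.range (Mf ω), ν (Sf m ω ∪ W)
        - stratVal n ν K W ℓ|}
      ≤ ENNReal.ofReal (Real.exp (-(B : ℝ) / (2 * γ ^ 2))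
          + 2 * Real.exp (-a) ^ ⌊(B : ℝ) / (2 * γ)⌋₊ / (Real.exp a - 1)) := by
  have hne := strata_nonempty (n := n) (K := K) hℓ
  set v := stratVal n ν K W ℓ with hv
  set r := stratRange n ν K W ℓ with hrdef
  set lo := (strata n K ℓ).inf' hne (fun S => ν (S ∪ W)) with hlo
  set hi := (strata n K ℓ).sup' hne (fun S => ν (S ∪ W)) with hhi
  have hrange : r = hi - lo := stratRange_eq hne
  have hlohi : lo < hi := by
    have := hr; rw [hrange] at this; linarith
  have ha0 : 0 < a := by rw [ha]; positivity
  set X : ℕ → Ω → ℝ := fun m ω => ν (Sf m ω ∪ W) with hX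
  have hnumeas : Measurable (fun T : Finset (Fin n) => ν (T ∪ W)) := measurable_from_top
  have hXmeas : ∀ m, Measurable (X m) := fun m => hnumeas.comp (hSmeas m)
  have hXindep : iIndepFun (m := fun _ => inferInstance) X (ℙ : Measure Ω) :=
    hiid.comp (fun _ => fun T => ν (T ∪ W)) (fun _ => hnumeas)
  have hbd : ∀ m, ∀ᵐ ω ∂(ℙ : Measure Ω), X m ω ∈ Set.Icc lo hi := by
    intro m
    filter_upwards [unif_ae_mem (hunif m)] with ω hω
    exact ⟨Finset.inf'_le (fun S => ν (S ∪ W)) hω, Finset.le_sup' (fun S => ν (S ∪ W)) hω⟩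
  have hmean : ∀ m, ∫ ω, X m ω ∂(ℙ : Measure Ω) = v :=
    fun m => unif_mean (hSmeas m) (hunif m) hℓ
  set m0 : ℕ := ⌊(B : ℝ) / (2 * γ)⌋₊ with hm0
  set E : Set Ω := {ω | t0 ≤ |((Mf ω : ℝ))⁻¹ * ∑ m ∈ Finset.range (Mf ω), ν (Sf m ω ∪ W)
      - v|} with hE
  set Ec : ℕ → Set Ω := fun c =>
    {ω | (c : ℝ) * t0 ≤ |(∑ m ∈ Finset.range c, X m ω) - (c : ℝ) * v|} with hEc
  -- decomposition
  have hsub : E ⊆ {ω | Mf ω ≤ m0} ∪ ⋃ c : ℕ, (E ∩ {ω | Mf ω = m0 + 1 + c}) := by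
    intro ω hω
    by_cases h : Mf ω ≤ m0
    · exact Or.inl h
    · right
      refine Set.mem_iUnion.mpr ⟨Mf ω - (m0 + 1), hω, ?_⟩
      simp only [Set.mem_setOf_eq]
      omega
  have hstep1 : ℙ E ≤ ℙ {ω | Mf ω ≤ m0} + ∑' c : ℕ, ℙ (E ∩ {ω | Mf ω = m0 + 1 + c}) := by
    calc ℙ E ≤ ℙ ({ω | Mf ω ≤ m0} ∪ ⋃ c : ℕ, (E ∩ {ω | Mf ω = m0 + 1 + c})) :=
          measure_mono hsub
      _ ≤ ℙ {ω | Mf ω ≤ m0} + ℙ (⋃ c : ℕ, (E ∩ {ω | Mf ω = m0 + 1 + c})) :=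
          measure_union_le _ _
      _ ≤ ℙ {ω | Mf ω ≤ m0} + ∑' c : ℕ, ℙ (E ∩ {ω | Mf ω = m0 + 1 + c}) := by
          exact add_le_add le_rfl (measure_iUnion_le _)
  -- per-count bound
  have hper : ∀ c : ℕ, ℙ (E ∩ {ω | Mf ω = m0 + 1 + c})
      ≤ ENNReal.ofReal (2 * Real.exp (-a * (m0 + 1 + c))) := by
    intro c
    set c' : ℕ := m0 + 1 + c with hc'
    have hc'0 : 0 < c' := by omega
    have hc'r : (0 : ℝ) < (c' : ℝ) := by exact_mod_cast hc'0
    have hsub2 : E ∩ {ω | Mf ω = c'} ⊆ Ec c' := by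
      rintro ω ⟨hωE, hωM⟩
      simp only [Set.mem_setOf_eq] at hωM ⊢
      simp only [hE, Set.mem_setOf_eq, hωM] at hωE
      have hrw : (∑ m ∈ Finset.range c', X m ω) - (c' : ℝ) * v
          = (c' : ℝ) * (((c' : ℝ))⁻¹ * ∑ m ∈ Finset.range c', ν (Sf m ω ∪ W) - v) := by
        field_simp
        rfl
      simp only [hEc, Set.mem_setOf_eq]
      rw [hrw, abs_mul, abs_of_pos hc'r]
      exact mul_le_mul_of_nonneg_left hωE hc'r.le
    have htail := hoeff_mean_tail hXmeas hXindep hlohi hbd hmean c' (le_of_lt ht0)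
    have hexp : 2 * Real.exp (-2 * c' * t0 ^ 2 / (hi - lo) ^ 2)
        = 2 * Real.exp (-a * (c' : ℝ)) := by
      congr 1
      congr 1
      rw [ha, ← hrange]
      have hrne : r ≠ 0 := ne_of_gt hr
      field_simp
    calc ℙ (E ∩ {ω | Mf ω = c'}) ≤ ℙ (Ec c') := measure_mono hsub2
      _ ≤ ENNReal.ofReal (2 * Real.exp (-a * (c' : ℝ))) := by
          rw [ENNReal.le_ofReal_iff_toReal_le (measure_ne_top _ _) (by positivity)]
          rw [← hexp]
          exact htail
      _ = ENNReal.ofReal (2 * Real.exp (-a * ((m0 : ℝ) + 1 + (c : ℝ)))) := by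
          congr 2
          push_cast [hc']
          ring
  -- geometric series
  have hgeom : ∑' c : ℕ, ENNReal.ofReal (2 * Real.exp (-a * ((m0 : ℝ) + 1 + (c : ℝ))))
      = ENNReal.ofReal (2 * Real.exp (-a) ^ m0 / (Real.exp a - 1)) := by
    have hterm : ∀ c : ℕ, 2 * Real.exp (-a * ((m0 : ℝ) + 1 + (c : ℝ)))
        = (2 * Real.exp (-a * ((m0 : ℝ) + 1))) * Real.exp (-a) ^ c := by
      intro c
      have hx : Real.exp (-a * ((m0 : ℝ) + 1 + (c : ℝ)))
          = Real.exp (-a * ((m0 : ℝ) + 1)) * Real.exp (-a) ^ c := by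
        rw [← Real.exp_nat_mul, ← Real.exp_add]
        congr 1
        ring
      rw [hx]
      ring
    have hlt1 : Real.exp (-a) < 1 := by
      rw [Real.exp_lt_one_iff]
      linarith
    have hsummable : Summable (fun c : ℕ => (2 * Real.exp (-a * ((m0 : ℝ) + 1)))
        * Real.exp (-a) ^ c) :=
      (summable_geometric_of_lt_one (Real.exp_nonneg _) hlt1).mul_left _
    calc ∑' c : ℕ, ENNReal.ofReal (2 * Real.exp (-a * ((m0 : ℝ) + 1 + (c : ℝ))))
        = ∑' c : ℕ, ENNReal.ofReal ((2 * Real.exp (-a * ((m0 : ℝ) + 1)))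
            * Real.exp (-a) ^ c) := by
          congr 1
          funext c
          rw [hterm c]
      _ = ENNReal.ofReal (∑' c : ℕ, (2 * Real.exp (-a * ((m0 : ℝ) + 1)))
            * Real.exp (-a) ^ c) := by
          rw [ENNReal.ofReal_tsum_of_nonneg _ hsummable]
          intro c
          positivity
      _ = ENNReal.ofReal (2 * Real.exp (-a) ^ m0 / (Real.exp a - 1)) := by
          congr 1
          rw [tsum_mul_left, tsum_geometric_of_lt_one (Real.exp_nonneg _) hlt1]
          have h1 : Real.exp (-a * ((m0 : ℝ) + 1)) = Real.exp (-a) ^ m0 * Real.exp (-a) := by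
            rw [← Real.exp_nat_mul, ← Real.exp_add]
            congr 1
            ring
          have hea1 : 1 < Real.exp a := by
            rw [← Real.exp_zero]
            exact Real.exp_lt_exp.mpr ha0
          have hne1 : 1 - Real.exp (-a) ≠ 0 := by linarith
          have hne2 : Real.exp a - 1 ≠ 0 := by linarith
          have hkey : Real.exp (-a) * (Real.exp a - 1) = 1 - Real.exp (-a) := by
            rw [mul_sub, ← Real.exp_add]
            simp
          rw [h1]
          field_simp
          linear_combination hkey
  calc ℙ E ≤ ℙ {ω | Mf ω ≤ m0} + ∑' c : ℕ, ℙ (E ∩ {ω | Mf ω = m0 + 1 + c}) := hstep1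
    _ ≤ ENNReal.ofReal (Real.exp (-(B : ℝ) / (2 * γ ^ 2)))
        + ENNReal.ofReal (2 * Real.exp (-a) ^ m0 / (Real.exp a - 1)) := by
        apply add_le_add
        · exact M_small hMmeas hB hγ hp1 hp2 hbin
        · rw [← hgeom]
          apply ENNReal.tsum_le_tsum
          intro c
          exact hper c
    _ = ENNReal.ofReal (Real.exp (-(B : ℝ) / (2 * γ ^ 2))
          + 2 * Real.exp (-a) ^ m0 / (Real.exp a - 1)) := by
        have hea1 : 1 < Real.exp a := by
          rw [← Real.exp_zero]
          exact Real.exp_lt_exp.mpr ha0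
        rw [← ENNReal.ofReal_add (by positivity)
          (div_nonneg (by positivity) (by linarith))]
end StratumBound

/-- The CII as a sum of stratum values. -/
lemma CII_eq (n : ℕ) (ν : Finset (Fin n) → ℝ) (lam : ℕ → ℝ) (K : Finset (Fin n)) :
    CII n ν lam K = ∑ ℓ ∈ Finset.range (n - K.card + 1), ((n - K.card).choose ℓ : ℝ) * lam ℓ *
      ∑ W ∈ K.powerset, (-1 : ℝ) ^ (K.card - W.card) * stratVal n ν K W ℓ := by
  rw [CII]
  have hmaps : ∀ S ∈ Kᶜ.powerset, S.card ∈ Finset.range (n - K.card + 1) := by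
    intro S hS
    rw [Finset.mem_range, Nat.lt_succ_iff]
    rw [Finset.mem_powerset] at hS
    calc S.card ≤ Kᶜ.card := Finset.card_le_card hS
      _ = n - K.card := by rw [Finset.card_compl, Fintype.card_fin]
  rw [← Finset.sum_fiberwise_of_maps_to hmaps
    (fun S => lam S.card * ∑ W ∈ K.powerset, (-1 : ℝ) ^ (K.card - W.card) * ν (S ∪ W))]
  apply Finset.sum_congr rfl
  intro ℓ hℓ
  rw [Finset.mem_range, Nat.lt_succ_iff] at hℓ
  have hfib : Kᶜ.powerset.filter (fun S => S.card = ℓ) = strata n K ℓ := rfl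
  rw [hfib]
  have hcongr : ∑ S ∈ strata n K ℓ,
      lam S.card * ∑ W ∈ K.powerset, (-1 : ℝ) ^ (K.card - W.card) * ν (S ∪ W)
      = ∑ S ∈ strata n K ℓ,
      lam ℓ * ∑ W ∈ K.powerset, (-1 : ℝ) ^ (K.card - W.card) * ν (S ∪ W) := by
    apply Finset.sum_congr rfl
    intro S hS
    have : S.card = ℓ := (Finset.mem_filter.mp hS).2
    rw [this]
  rw [hcongr]
  have hcards : ((n - K.card).choose ℓ : ℝ) ≠ 0 := by
    have := Nat.choose_pos hℓ
    positivity
  calc ∑ S ∈ strata n K ℓ,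
        lam ℓ * ∑ W ∈ K.powerset, (-1 : ℝ) ^ (K.card - W.card) * ν (S ∪ W)
      = lam ℓ * ∑ W ∈ K.powerset, (-1 : ℝ) ^ (K.card - W.card) * ∑ S ∈ strata n K ℓ, ν (S ∪ W) := by
        rw [← Finset.mul_sum, Finset.sum_comm]
        congr 1
        apply Finset.sum_congr rfl
        intro W _
        rw [← Finset.mul_sum]
    _ = ((n - K.card).choose ℓ : ℝ) * lam ℓ *
        ∑ W ∈ K.powerset, (-1 : ℝ) ^ (K.card - W.card) * stratVal n ν K W ℓ := by
        rw [Finset.mul_sum, Finset.mul_sum]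
        apply Finset.sum_congr rfl
        intro W _
        rw [stratVal]
        field_simp

/-- The estimation error as a double sum over estimated strata. -/
lemma diff_eq {Ω : Type*} (n : ℕ) (ν : Finset (Fin n) → ℝ) (K : Finset (Fin n))
    (lam : ℕ → ℝ) (L : ℕ → Finset ℕ) (hL : ∀ w, L w ⊆ Finset.range (n - K.card + 1))
    (S : Finset (Fin n) → ℕ → ℕ → Ω → Finset (Fin n))
    (M : Finset (Fin n) → ℕ → Ω → ℕ) (ω : Ω) :
    IhatCII n ν K lam L S M ω - CII n ν lam K
      = ∑ W ∈ K.powerset, ∑ ℓ ∈ L W.card, (-1 : ℝ) ^ (K.card - W.card) *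
          (((n - K.card).choose ℓ : ℝ) * lam ℓ) *
          (IhatStrat n ν K L S M W ℓ ω - stratVal n ν K W ℓ) := by
  rw [IhatCII, CII_eq, ← Finset.sum_sub_distrib]
  have h1 : ∀ ℓ, ((n - K.card).choose ℓ : ℝ) * lam ℓ *
        (∑ W ∈ K.powerset, (-1 : ℝ) ^ (K.card - W.card) * IhatStrat n ν K L S M W ℓ ω)
      - ((n - K.card).choose ℓ : ℝ) * lam ℓ *
        (∑ W ∈ K.powerset, (-1 : ℝ) ^ (K.card - W.card) * stratVal n ν K W ℓ)
      = ∑ W ∈ K.powerset, (-1 : ℝ) ^ (K.card - W.card) *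
          (((n - K.card).choose ℓ : ℝ) * lam ℓ) *
          (IhatStrat n ν K L S M W ℓ ω - stratVal n ν K W ℓ) := by
    intro ℓ
    rw [← mul_sub, ← Finset.sum_sub_distrib, Finset.mul_sum]
    apply Finset.sum_congr rfl
    intro W _
    ring
  rw [Finset.sum_congr rfl (fun ℓ _ => h1 ℓ), Finset.sum_comm]
  apply Finset.sum_congr rfl
  intro W _
  rw [← Finset.sum_subset (hL W.card)]
  intro ℓ _ hℓL
  rw [IhatStrat, if_neg hℓL]
  ring

section StratNull
variable {Ω : Type*} [MeasureSpace Ω] [IsProbabilityMeasure (ℙ : Measure Ω)]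
  {n : ℕ} {K W : Finset (Fin n)} {ℓ : ℕ} {ν : Finset (Fin n) → ℝ}
/-- A stratum with zero range has a.s. zero estimation error. -/
lemma strat_null {Sf : ℕ → Ω → Finset (Fin n)} {Mf : Ω → ℕ}
    (hunif : ∀ (m : ℕ) (T : Finset (Fin n)), ℙ {ω | Sf m ω = T}
      = if T ∈ strata n K ℓ then ((strata n K ℓ).card : ℝ≥0∞)⁻¹ else 0)
    (hM0 : ℙ {ω | Mf ω = 0} = 0)
    (hℓ : ℓ ≤ n - K.card) (hr0 : stratRange n ν K W ℓ = 0) :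
    ℙ {ω | ((Mf ω : ℝ))⁻¹ * ∑ m ∈ Finset.range (Mf ω), ν (Sf m ω ∪ W)
        - stratVal n ν K W ℓ ≠ 0} = 0 := by
  have hne := strata_nonempty (n := n) (K := K) hℓ
  set lo := (strata n K ℓ).inf' hne (fun S => ν (S ∪ W)) with hlo
  have hconst : ∀ T ∈ strata n K ℓ, ν (T ∪ W) = lo := by
    intro T hT
    have h1 : lo ≤ ν (T ∪ W) := Finset.inf'_le (fun S => ν (S ∪ W)) hT
    have h2 : ν (T ∪ W) ≤ (strata n K ℓ).sup' hne (fun S => ν (S ∪ W)) :=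
      Finset.le_sup' (fun S => ν (S ∪ W)) hT
    have h3 := stratRange_eq (ν := ν) (W := W) hne
    rw [hr0] at h3
    linarith
  have hcard0 : ((n - K.card).choose ℓ : ℝ) ≠ 0 := by
    have := Nat.choose_pos hℓ
    positivity
  have hval : stratVal n ν K W ℓ = lo := by
    rw [stratVal, Finset.sum_congr rfl hconst, Finset.sum_const,
      card_strata (n := n) (K := K) (ℓ := ℓ), nsmul_eq_mul]
    field_simp
  set G : Set Ω := {ω | Mf ω = 0} ∪ ⋃ m : ℕ, {ω | Sf m ω ∉ strata n K ℓ} with hG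
  have hGnull : ℙ G = 0 := by
    refine le_antisymm ?_ zero_le
    calc ℙ G ≤ ℙ {ω | Mf ω = 0} + ℙ (⋃ m : ℕ, {ω | Sf m ω ∉ strata n K ℓ}) :=
          measure_union_le _ _
      _ ≤ 0 + ∑' m : ℕ, ℙ {ω | Sf m ω ∉ strata n K ℓ} := by
          rw [hM0]
          exact add_le_add le_rfl (measure_iUnion_le _)
      _ = 0 := by
          rw [zero_add]
          convert tsum_zero with m
          have := unif_ae_mem (hunif m)
          rwa [ae_iff] at this
  refine le_antisymm (le_trans (measure_mono ?_) (le_of_eq hGnull)) zero_le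
  intro ω hω
  simp only [Set.mem_setOf_eq] at hω
  by_contra hωG
  apply hω
  simp only [hG, Set.mem_union, Set.mem_iUnion, Set.mem_setOf_eq] at hωG
  push_neg at hωG
  obtain ⟨hM, hS⟩ := hωG
  have hMpos : (0 : ℝ) < (Mf ω : ℝ) := by
    have : 0 < Mf ω := Nat.pos_of_ne_zero hM
    exact_mod_cast this
  have : ∑ m ∈ Finset.range (Mf ω), ν (Sf m ω ∪ W) = (Mf ω : ℝ) * lo := by
    rw [Finset.sum_congr rfl (fun m _ => hconst _ (hS m)), Finset.sum_const,
      Finset.card_range, nsmul_eq_mul]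
  rw [this, hval]
  field_simp
  ring
end StratNull

lemma gam_ge_one {n k : ℕ} (hk : 2 ≤ k) (hkn : k ≤ n) : 1 ≤ gam n k := by
  have hn2 : (2 : ℝ) ≤ (n : ℝ) := by exact_mod_cast le_trans hk hkn
  rw [gam]
  split_ifs with h
  · nlinarith
  · have h1 : (1 : ℝ) ≤ (n : ℝ) := by linarith
    have h2 : (1 : ℝ) ≤ (n : ℝ) - k + 1 := by
      have : (k : ℝ) ≤ (n : ℝ) := by exact_mod_cast hkn
      linarith
    have h3 : (1 : ℝ) ≤ (n : ℝ) ^ (k - 1) := one_le_pow₀ h1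
    have h4 : (1 : ℝ) ≤ ((n : ℝ) - k + 1) ^ 2 := one_le_pow₀ h2
    nlinarith

/-- **Hoeffding-type threshold exceedance bound for the CII estimate (Theorem 4.5).** -/
theorem cii_estimate_hoeffding_bound {Ω : Type*} [MeasureSpace Ω]
    [IsProbabilityMeasure (ℙ : Measure Ω)]
    (n : ℕ) (ν : Finset (Fin n) → ℝ) (K : Finset (Fin n)) (hk : 2 ≤ K.card)
    (lam : ℕ → ℝ) (hlam : ∀ ℓ ≤ n - K.card, 0 < lam ℓ)
    (L : ℕ → Finset ℕ) (hL : ∀ w, L w ⊆ Finset.range (n - K.card + 1))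
    (hR : 0 < RK n ν K L)
    (S : Finset (Fin n) → ℕ → ℕ → Ω → Finset (Fin n))
    (M : Finset (Fin n) → ℕ → Ω → ℕ)
    (B : ℕ) (hB : 1 ≤ B) (p : Finset (Fin n) → ℕ → ℝ)
    (hSmeas : ∀ W ℓ m, Measurable (S W ℓ m)) (hMmeas : ∀ W ℓ, Measurable (M W ℓ))
    -- within each estimated stratum the samples are i.i.d. uniform on the stratum
    (hiid : ∀ W, W ⊆ K → ∀ ℓ ∈ L W.card,
      iIndepFun (m := fun _ => finsetMeasurableSpace n) (S W ℓ) ℙ)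
    (hunif : ∀ W, W ⊆ K → ∀ ℓ ∈ L W.card, ∀ (m : ℕ) (T : Finset (Fin n)),
      ℙ {ω | S W ℓ m ω = T}
        = if T ∈ strata n K ℓ then ((strata n K ℓ).card : ℝ≥0∞)⁻¹ else 0)
    -- counts: `M_{W,ℓ} = 1 + Y_{W,ℓ}` with `Y_{W,ℓ} ~ Binomial(B̃, p_{W,ℓ})`,
    -- `p_{W,ℓ} ≥ 1/γ_k`
    (hp : ∀ W, W ⊆ K → ∀ ℓ ∈ L W.card,
      1 / gam n K.card ≤ p W ℓ ∧ p W ℓ ≤ 1)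
    (hbin : ∀ W, W ⊆ K → ∀ ℓ ∈ L W.card, ∀ j : ℕ,
      ℙ {ω | M W ℓ ω = j + 1}
        = ENNReal.ofReal ((B.choose j : ℝ) * p W ℓ ^ j * (1 - p W ℓ) ^ (B - j)))
    -- each count is independent of that stratum's sample sequence
    (hindep : ∀ W, W ⊆ K → ∀ ℓ ∈ L W.card,
      IndepFun (M W ℓ) (fun ω => fun m => S W ℓ m ω) ℙ)
    (ε : ℝ) (hε : 0 < ε) :
    (ℙ {ω | ε ≤ |IhatCII n ν K lam L S M ω - CII n ν lam K|}).toReal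
      ≤ ∑ W ∈ K.powerset, ∑ ℓ ∈ L W.card,
          (Real.exp (-(B : ℝ) / (2 * gam n K.card ^ 2)) +
            2 * Real.exp (-(2 * ε ^ 2) /
                (((n - K.card).choose ℓ : ℝ) ^ 2 * lam ℓ ^ 2 * RK n ν K L ^ 2))
                  ^ (⌊(B : ℝ) / (2 * gam n K.card)⌋₊) /
              (Real.exp ((2 * ε ^ 2) /
                (((n - K.card).choose ℓ : ℝ) ^ 2 * lam ℓ ^ 2 * RK n ν K L ^ 2)) - 1)) := by
  classical
  have hkn : K.card ≤ n := by
    have := Finset.card_le_univ K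
    simpa using this
  have hγ1 : 1 ≤ gam n K.card := gam_ge_one hk hkn
  set γ := gam n K.card with hγdef
  set R := RK n ν K L with hRdef
  have hRne : R ≠ 0 := ne_of_gt hR
  set N := n - K.card with hN
  -- abbreviations
  set D : Finset (Fin n) → ℕ → Ω → ℝ := fun W ℓ ω =>
    IhatStrat n ν K L S M W ℓ ω - stratVal n ν K W ℓ with hD
  set co : ℕ → ℝ := fun ℓ => ((N.choose ℓ : ℝ)) * lam ℓ with hco
  have hcopos : ∀ ℓ ≤ N, 0 < co ℓ := by
    intro ℓ hℓ
    apply mul_pos _ (hlam ℓ hℓ)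
    exact_mod_cast Nat.choose_pos hℓ
  have hmemN : ∀ {W : Finset (Fin n)} {ℓ : ℕ}, ℓ ∈ L W.card → ℓ ≤ N := by
    intro W ℓ hℓ
    have := hL W.card hℓ
    rw [Finset.mem_range, Nat.lt_succ_iff] at this
    exact this
  have hrnonneg : ∀ (W : Finset (Fin n)) {ℓ : ℕ}, ℓ ∈ L W.card →
      0 ≤ stratRange n ν K W ℓ := by
    intro W ℓ hℓ
    exact stratRange_nonneg (strata_nonempty (hmemN hℓ))
  -- the bad events
  set F : Finset (Fin n) → ℕ → Set Ω := fun W ℓ =>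
    if 0 < stratRange n ν K W ℓ then
      {ω | ε * stratRange n ν K W ℓ / R / co ℓ ≤ |D W ℓ ω|}
    else {ω | D W ℓ ω ≠ 0} with hF
  -- union bound inclusion
  have hsub : {ω | ε ≤ |IhatCII n ν K lam L S M ω - CII n ν lam K|}
      ⊆ ⋃ W ∈ K.powerset, ⋃ ℓ ∈ L W.card, F W ℓ := by
    intro ω hω
    simp only [Set.mem_setOf_eq] at hω
    by_contra hnot
    simp only [Set.mem_iUnion, not_exists] at hnot
    have hptle : ∀ W ∈ K.powerset, ∀ ℓ ∈ L W.card,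
        co ℓ * |D W ℓ ω| ≤ ε * stratRange n ν K W ℓ / R := by
      intro W hW ℓ hℓ
      have hnF := hnot W hW ℓ hℓ
      by_cases hrpos : 0 < stratRange n ν K W ℓ
      · simp only [hF, if_pos hrpos, Set.mem_setOf_eq, not_le] at hnF
        have hcoℓ := hcopos ℓ (hmemN hℓ)
        refine le_of_lt ?_
        calc co ℓ * |D W ℓ ω| < co ℓ * (ε * stratRange n ν K W ℓ / R / co ℓ) := by
              apply mul_lt_mul_of_pos_left hnF hcoℓ
          _ = ε * stratRange n ν K W ℓ / R := by field_simp
      · simp only [hF, if_neg hrpos, Set.mem_setOf_eq, not_not] at hnF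
        rw [hnF]
        simp only [abs_zero, mul_zero]
        have hr0 : stratRange n ν K W ℓ = 0 :=
          le_antisymm (not_lt.mp hrpos) (hrnonneg W hℓ)
        rw [hr0]
        simp
    -- a strict pair exists
    have hex : ∃ W ∈ K.powerset, ∃ ℓ ∈ L W.card, 0 < stratRange n ν K W ℓ := by
      by_contra hno
      push_neg at hno
      have : R = 0 := by
        rw [hRdef, RK]
        apply Finset.sum_eq_zero
        intro W hW
        apply Finset.sum_eq_zero
        intro ℓ hℓ
        exact le_antisymm (hno W hW ℓ hℓ) (hrnonneg W hℓ)
      exact hRne this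
    obtain ⟨W0, hW0, ℓ0, hℓ0, hr0pos⟩ := hex
    have hstrict : co ℓ0 * |D W0 ℓ0 ω| < ε * stratRange n ν K W0 ℓ0 / R := by
      have hnF := hnot W0 hW0 ℓ0 hℓ0
      simp only [hF, if_pos hr0pos, Set.mem_setOf_eq, not_le] at hnF
      have hcoℓ := hcopos ℓ0 (hmemN hℓ0)
      calc co ℓ0 * |D W0 ℓ0 ω| < co ℓ0 * (ε * stratRange n ν K W0 ℓ0 / R / co ℓ0) := by
            apply mul_lt_mul_of_pos_left hnF hcoℓ
        _ = ε * stratRange n ν K W0 ℓ0 / R := by field_simp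
    -- triangle inequality chain
    have htri : |IhatCII n ν K lam L S M ω - CII n ν lam K|
        ≤ ∑ W ∈ K.powerset, ∑ ℓ ∈ L W.card, co ℓ * |D W ℓ ω| := by
      rw [diff_eq n ν K lam L hL S M ω]
      calc |∑ W ∈ K.powerset, ∑ ℓ ∈ L W.card, (-1 : ℝ) ^ (K.card - W.card) *
              (((n - K.card).choose ℓ : ℝ) * lam ℓ) * (IhatStrat n ν K L S M W ℓ ω
              - stratVal n ν K W ℓ)|
          ≤ ∑ W ∈ K.powerset, |∑ ℓ ∈ L W.card, (-1 : ℝ) ^ (K.card - W.card) *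
              (((n - K.card).choose ℓ : ℝ) * lam ℓ) * (IhatStrat n ν K L S M W ℓ ω
              - stratVal n ν K W ℓ)| := Finset.abs_sum_le_sum_abs _ _
        _ ≤ ∑ W ∈ K.powerset, ∑ ℓ ∈ L W.card, |(-1 : ℝ) ^ (K.card - W.card) *
              (((n - K.card).choose ℓ : ℝ) * lam ℓ) * (IhatStrat n ν K L S M W ℓ ω
              - stratVal n ν K W ℓ)| :=
            Finset.sum_le_sum (fun W _ => Finset.abs_sum_le_sum_abs _ _)
        _ = ∑ W ∈ K.powerset, ∑ ℓ ∈ L W.card, co ℓ * |D W ℓ ω| := by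
            apply Finset.sum_congr rfl
            intro W hW
            apply Finset.sum_congr rfl
            intro ℓ hℓ
            rw [abs_mul, abs_mul, abs_pow, abs_neg, abs_one, one_pow, one_mul,
              abs_of_pos (show (0:ℝ) < ((n - K.card).choose ℓ : ℝ) * lam ℓ from
                hcopos ℓ (hmemN hℓ))]
    have hlt : ∑ W ∈ K.powerset, ∑ ℓ ∈ L W.card, co ℓ * |D W ℓ ω|
        < ∑ W ∈ K.powerset, ∑ ℓ ∈ L W.card, ε * stratRange n ν K W ℓ / R := by
      apply Finset.sum_lt_sum
      · intro W hW
        exact Finset.sum_le_sum (fun ℓ hℓ => hptle W hW ℓ hℓ)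
      · refine ⟨W0, hW0, ?_⟩
        apply Finset.sum_lt_sum
        · intro ℓ hℓ
          exact hptle W0 hW0 ℓ hℓ
        · exact ⟨ℓ0, hℓ0, hstrict⟩
    have hsum : ∑ W ∈ K.powerset, ∑ ℓ ∈ L W.card, ε * stratRange n ν K W ℓ / R = ε := by
      calc ∑ W ∈ K.powerset, ∑ ℓ ∈ L W.card, ε * stratRange n ν K W ℓ / R
          = ∑ W ∈ K.powerset, (ε / R) * ∑ ℓ ∈ L W.card, stratRange n ν K W ℓ := by
            apply Finset.sum_congr rfl
            intro W _
            rw [Finset.mul_sum]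
            apply Finset.sum_congr rfl
            intro ℓ _
            ring
        _ = (ε / R) * R := by
            rw [← Finset.mul_sum]
            rfl
        _ = ε := by field_simp
    rw [hsum] at hlt
    linarith [le_trans hω htri]
  -- per-pair bound
  have hper : ∀ W ∈ K.powerset, ∀ ℓ ∈ L W.card,
      ℙ (F W ℓ) ≤ ENNReal.ofReal
        (Real.exp (-(B : ℝ) / (2 * γ ^ 2)) +
          2 * Real.exp (-(2 * ε ^ 2) /
              (((n - K.card).choose ℓ : ℝ) ^ 2 * lam ℓ ^ 2 * R ^ 2))
                ^ (⌊(B : ℝ) / (2 * γ)⌋₊) /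
            (Real.exp ((2 * ε ^ 2) /
              (((n - K.card).choose ℓ : ℝ) ^ 2 * lam ℓ ^ 2 * R ^ 2)) - 1)) := by
    intro W hW ℓ hℓ
    have hWK : W ⊆ K := Finset.mem_powerset.mp hW
    have hℓN : ℓ ≤ N := hmemN hℓ
    have hcoℓ : 0 < co ℓ := hcopos ℓ hℓN
    have hlamℓ : 0 < lam ℓ := hlam ℓ hℓN
    have hchoose : (0:ℝ) < ((n - K.card).choose ℓ : ℝ) := by
      exact_mod_cast Nat.choose_pos hℓN
    set a' : ℝ := 2 * ε ^ 2 / (((n - K.card).choose ℓ : ℝ) ^ 2 * lam ℓ ^ 2 * R ^ 2)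
      with ha'
    have hnegdiv : -(2 * ε ^ 2) / (((n - K.card).choose ℓ : ℝ) ^ 2 * lam ℓ ^ 2 * R ^ 2)
        = -a' := by rw [ha', neg_div]
    rw [hnegdiv, ha']
    by_cases hrpos : 0 < stratRange n ν K W ℓ
    · set t0 : ℝ := ε * stratRange n ν K W ℓ / R / co ℓ with ht0def
      have ht0 : 0 < t0 := by
        rw [ht0def]
        positivity
      have hFset : F W ℓ = {ω | t0 ≤ |((M W ℓ ω : ℝ))⁻¹ *
          ∑ m ∈ Finset.range (M W ℓ ω), ν (S W ℓ m ω ∪ W) - stratVal n ν K W ℓ|} := by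
        simp only [hF, if_pos hrpos]
        ext ω
        simp only [Set.mem_setOf_eq, hD, IhatStrat, if_pos hℓ]
        rfl
      have haeq : a' = 2 * t0 ^ 2 / stratRange n ν K W ℓ ^ 2 := by
        rw [ha', ht0def, hco]
        have hrne : stratRange n ν K W ℓ ≠ 0 := ne_of_gt hrpos
        field_simp
        rw [hN, div_self (pow_ne_zero _ hchoose.ne')]
      rw [hFset]
      have := stratum_bound (hSmeas W ℓ) (hMmeas W ℓ) (hiid W hWK ℓ hℓ)
        (hunif W hWK ℓ hℓ) hB hγ1 (hp W hWK ℓ hℓ).1 (hp W hWK ℓ hℓ).2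
        (hbin W hWK ℓ hℓ) hℓN ht0 hrpos haeq
      exact this
    · have hr0 : stratRange n ν K W ℓ = 0 :=
        le_antisymm (not_lt.mp hrpos) (hrnonneg W hℓ)
      have hFset : F W ℓ = {ω | ((M W ℓ ω : ℝ))⁻¹ *
          ∑ m ∈ Finset.range (M W ℓ ω), ν (S W ℓ m ω ∪ W) - stratVal n ν K W ℓ ≠ 0} := by
        simp only [hF, if_neg hrpos]
        ext ω
        simp only [Set.mem_setOf_eq, hD, IhatStrat, if_pos hℓ]
      rw [hFset]
      have hM0 : ℙ {ω | M W ℓ ω = 0} = 0 :=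
        M_zero (hMmeas W ℓ) hB hγ1 (hp W hWK ℓ hℓ).1 (hp W hWK ℓ hℓ).2 (hbin W hWK ℓ hℓ)
      rw [strat_null (hunif W hWK ℓ hℓ) hM0 hℓN hr0]
      exact zero_le
  -- nonnegativity of the bound terms
  have htermnn : ∀ W ∈ K.powerset, ∀ ℓ ∈ L W.card,
      0 ≤ Real.exp (-(B : ℝ) / (2 * γ ^ 2)) +
          2 * Real.exp (-(2 * ε ^ 2) /
              (((n - K.card).choose ℓ : ℝ) ^ 2 * lam ℓ ^ 2 * R ^ 2))
                ^ (⌊(B : ℝ) / (2 * γ)⌋₊) /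
            (Real.exp ((2 * ε ^ 2) /
              (((n - K.card).choose ℓ : ℝ) ^ 2 * lam ℓ ^ 2 * R ^ 2)) - 1) := by
    intro W hW ℓ hℓ
    have hℓN : ℓ ≤ N := hmemN hℓ
    have hlamℓ : 0 < lam ℓ := hlam ℓ hℓN
    have hchoose : (0:ℝ) < ((n - K.card).choose ℓ : ℝ) := by
      exact_mod_cast Nat.choose_pos hℓN
    have hapos : 0 < (2 * ε ^ 2) / (((n - K.card).choose ℓ : ℝ) ^ 2 * lam ℓ ^ 2 * R ^ 2) := by
      positivity
    have hea : 1 < Real.exp ((2 * ε ^ 2) /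
        (((n - K.card).choose ℓ : ℝ) ^ 2 * lam ℓ ^ 2 * R ^ 2)) := by
      rw [← Real.exp_zero]
      exact Real.exp_lt_exp.mpr hapos
    have h2 : 0 ≤ 2 * Real.exp (-(2 * ε ^ 2) /
          (((n - K.card).choose ℓ : ℝ) ^ 2 * lam ℓ ^ 2 * R ^ 2))
            ^ (⌊(B : ℝ) / (2 * γ)⌋₊) /
          (Real.exp ((2 * ε ^ 2) /
            (((n - K.card).choose ℓ : ℝ) ^ 2 * lam ℓ ^ 2 * R ^ 2)) - 1) := by
      apply div_nonneg _ (by linarith)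
      positivity
    positivity
  -- conclude
  have hchain : ℙ {ω | ε ≤ |IhatCII n ν K lam L S M ω - CII n ν lam K|}
      ≤ ∑ W ∈ K.powerset, ∑ ℓ ∈ L W.card, ENNReal.ofReal
        (Real.exp (-(B : ℝ) / (2 * γ ^ 2)) +
          2 * Real.exp (-(2 * ε ^ 2) /
              (((n - K.card).choose ℓ : ℝ) ^ 2 * lam ℓ ^ 2 * R ^ 2))
                ^ (⌊(B : ℝ) / (2 * γ)⌋₊) /
            (Real.exp ((2 * ε ^ 2) /
              (((n - K.card).choose ℓ : ℝ) ^ 2 * lam ℓ ^ 2 * R ^ 2)) - 1)) := by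
    calc ℙ {ω | ε ≤ |IhatCII n ν K lam L S M ω - CII n ν lam K|}
        ≤ ℙ (⋃ W ∈ K.powerset, ⋃ ℓ ∈ L W.card, F W ℓ) := measure_mono hsub
      _ ≤ ∑ W ∈ K.powerset, ℙ (⋃ ℓ ∈ L W.card, F W ℓ) :=
          measure_biUnion_finset_le _ _
      _ ≤ ∑ W ∈ K.powerset, ∑ ℓ ∈ L W.card, ℙ (F W ℓ) :=
          Finset.sum_le_sum (fun W _ => measure_biUnion_finset_le _ _)
      _ ≤ _ := Finset.sum_le_sum (fun W hW =>
          Finset.sum_le_sum (fun ℓ hℓ => hper W hW ℓ hℓ))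
  have hofreal : ∑ W ∈ K.powerset, ∑ ℓ ∈ L W.card, ENNReal.ofReal
        (Real.exp (-(B : ℝ) / (2 * γ ^ 2)) +
          2 * Real.exp (-(2 * ε ^ 2) /
              (((n - K.card).choose ℓ : ℝ) ^ 2 * lam ℓ ^ 2 * R ^ 2))
                ^ (⌊(B : ℝ) / (2 * γ)⌋₊) /
            (Real.exp ((2 * ε ^ 2) /
              (((n - K.card).choose ℓ : ℝ) ^ 2 * lam ℓ ^ 2 * R ^ 2)) - 1))
      = ENNReal.ofReal (∑ W ∈ K.powerset, ∑ ℓ ∈ L W.card,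
        (Real.exp (-(B : ℝ) / (2 * γ ^ 2)) +
          2 * Real.exp (-(2 * ε ^ 2) /
              (((n - K.card).choose ℓ : ℝ) ^ 2 * lam ℓ ^ 2 * R ^ 2))
                ^ (⌊(B : ℝ) / (2 * γ)⌋₊) /
            (Real.exp ((2 * ε ^ 2) /
              (((n - K.card).choose ℓ : ℝ) ^ 2 * lam ℓ ^ 2 * R ^ 2)) - 1))) := by
    rw [ENNReal.ofReal_sum_of_nonneg]
    · apply Finset.sum_congr rfl
      intro W hW
      rw [ENNReal.ofReal_sum_of_nonneg]
      intro ℓ hℓ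
      exact htermnn W hW ℓ hℓ
    · intro W hW
      apply Finset.sum_nonneg
      intro ℓ hℓ
      exact htermnn W hW ℓ hℓ
  rw [hofreal] at hchain
  have := (ENNReal.le_ofReal_iff_toReal_le (measure_ne_top _ _)
    (Finset.sum_nonneg (fun W hW => Finset.sum_nonneg (fun ℓ hℓ => htermnn W hW ℓ hℓ)))).mp
    hchain
  exact this
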